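/- With moves a = (1,0), b = (0,1), c = (1,1) on the 2-dimensional grid, the unique word from (p,q) to (r,s) (with p ≤ r, q ≤ s) avoiding the factors ab, ba, ac, bc is c^m a^{(r-p)-m} if r-p ≥ s-q where m = s-q, and c^m b^{(s-q)-m} with m = r-p otherwise; i.e., it takes all diagonal (c) moves first. -/

import Mathlib

/-- The 4-letter alphabet {a, b, c, x}. -/
inductive Ltr | a | b | c | x
deriving DecidableEq

/-- The forbidden two-letter factors: ab, ba, ac, bc. -/
def forb : List (List Ltr) := [[.a, .b], [.b, .a], [.a, .c], [.b, .c]]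

/-- `w` avoids all of ab, ba, ac, bc as factors. -/
def Avoids (w : List Ltr) : Prop := ∀ f ∈ forb, ¬ f <:+: w

/-- Moves on the 2-dimensional grid: a = (1,0), b = (0,1), c = (1,1), x = (1,1). -/
def mv : Ltr → ℕ × ℕ
  | .a => (1, 0)
  | .b => (0, 1)
  | .c => (1, 1)
  | .x => (1, 1)

/-- Total displacement of a word. -/
def disp (w : List Ltr) : ℕ × ℕ := (w.map mv).sum

/-- `w` is a word over {a,b,c} whose moves go from `(p,q)` to `(r,s)`. -/
def Connects (p q r s : ℕ) (w : List Ltr) : Prop :=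
  Ltr.x ∉ w ∧ p + (disp w).1 = r ∧ q + (disp w).2 = s

/-- The canonical word with diagonal (c) moves first: `c^m a^{d1-m}` if
`d1 ≥ d2` (with `m = d2`), and `c^m b^{d2-m}` (with `m = d1`) otherwise. -/
def canonWord (d1 d2 : ℕ) : List Ltr :=
  if d2 ≤ d1 then List.replicate d2 .c ++ List.replicate (d1 - d2) .a
  else List.replicate d1 .c ++ List.replicate (d2 - d1) .b

lemma disp_ca (k m : ℕ) :
    disp (List.replicate k .c ++ List.replicate m .a) = (k + m, k) := by
  simp [disp, List.sum_replicate, mv, Prod.ext_iff]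

lemma disp_cb (k m : ℕ) :
    disp (List.replicate k .c ++ List.replicate m .b) = (k, k + m) := by
  simp [disp, List.sum_replicate, mv, Prod.ext_iff]

lemma avoids_rep_a (m : ℕ) : Avoids (List.replicate m .a) := by
  intro f hf hinf
  have h : ∀ x ∈ f, x = _ := fun x hx => List.eq_of_mem_replicate (hinf.subset hx)
  simp [forb] at hf
  rcases hf with rfl|rfl|rfl|rfl <;> simp_all

lemma avoids_rep_b (m : ℕ) : Avoids (List.replicate m .b) := by
  intro f hf hinf
  have h : ∀ x ∈ f, x = _ := fun x hx => List.eq_of_mem_replicate (hinf.subset hx)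
  simp [forb] at hf
  rcases hf with rfl|rfl|rfl|rfl <;> simp_all

lemma avoids_cons_c {w : List Ltr} (hw : Avoids w) : Avoids (.c :: w) := by
  intro f hf hinf
  rcases List.infix_cons_iff.mp hinf with hpre | hinf'
  · simp [forb] at hf
    rcases hf with rfl|rfl|rfl|rfl <;>
      · rcases hpre with ⟨t, ht⟩; simp at ht
  · exact hw f hf hinf'

lemma avoids_ca (k m : ℕ) : Avoids (List.replicate k .c ++ List.replicate m .a) := by
  induction k with
  | zero => simpa using avoids_rep_a m
  | succ n ih => simpa [List.replicate_succ] using avoids_cons_c ih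

lemma avoids_cb (k m : ℕ) : Avoids (List.replicate k .c ++ List.replicate m .b) := by
  induction k with
  | zero => simpa using avoids_rep_b m
  | succ n ih => simpa [List.replicate_succ] using avoids_cons_c ih

lemma avoids_tail {u : Ltr} {w : List Ltr} (h : Avoids (u :: w)) : Avoids w :=
  fun f hf hinf => h f hf (hinf.trans (List.infix_cons (List.infix_refl w)))

lemma struct {w : List Ltr} (hx : Ltr.x ∉ w) (hav : Avoids w) :
    ∃ k m, w = List.replicate k .c ++ List.replicate m .a ∨
           w = List.replicate k .c ++ List.replicate m .b := by
  induction w with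
  | nil => exact ⟨0, 0, Or.inl rfl⟩
  | cons u t ih =>
    have hxt : Ltr.x ∉ t := fun h => hx (List.mem_cons_of_mem _ h)
    obtain ⟨k, m, hcase⟩ := ih hxt (avoids_tail hav)
    cases u with
    | x => exact absurd List.mem_cons_self hx
    | c =>
      refine ⟨k + 1, m, ?_⟩
      rcases hcase with rfl | rfl
      · exact Or.inl (by simp [List.replicate_succ])
      · exact Or.inr (by simp [List.replicate_succ])
    | a =>
      rcases hcase with rfl | rfl
      · cases k with
        | zero => exact ⟨0, m + 1, Or.inl (by simp [List.replicate_succ])⟩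
        | succ n =>
          exact absurd ⟨[], List.replicate n .c ++ List.replicate m .a,
            by simp [List.replicate_succ]⟩ (hav [.a, .c] (by simp [forb]))
      · cases k with
        | zero =>
          cases m with
          | zero => exact ⟨0, 1, Or.inl (by simp)⟩
          | succ n =>
            exact absurd ⟨[], List.replicate n .b, by simp [List.replicate_succ]⟩
              (hav [.a, .b] (by simp [forb]))
        | succ n =>
          exact absurd ⟨[], List.replicate n .c ++ List.replicate m .b,
            by simp [List.replicate_succ]⟩ (hav [.a, .c] (by simp [forb]))
    | b =>
      rcases hcase with rfl | rfl
      · cases k with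
        | zero =>
          cases m with
          | zero => exact ⟨0, 1, Or.inr (by simp)⟩
          | succ n =>
            exact absurd ⟨[], List.replicate n .a, by simp [List.replicate_succ]⟩
              (hav [.b, .a] (by simp [forb]))
        | succ n =>
          exact absurd ⟨[], List.replicate n .c ++ List.replicate m .a,
            by simp [List.replicate_succ]⟩ (hav [.b, .c] (by simp [forb]))
      · cases k with
        | zero => exact ⟨0, m + 1, Or.inr (by simp [List.replicate_succ])⟩
        | succ n =>
          exact absurd ⟨[], List.replicate n .c ++ List.replicate m .b,
            by simp [List.replicate_succ]⟩ (hav [.b, .c] (by simp [forb]))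

/-- The unique word from `(p,q)` to `(r,s)` avoiding the factors ab, ba, ac, bc
is the one taking all diagonal (c) moves first: `c^{s-q} a^{(r-p)-(s-q)}` if
`r-p ≥ s-q`, and `c^{r-p} b^{(s-q)-(r-p)}` otherwise. -/
theorem canonical_avoiding_path (p q r s : ℕ) (hp : p ≤ r) (hq : q ≤ s) :
    Connects p q r s (canonWord (r - p) (s - q)) ∧
    Avoids (canonWord (r - p) (s - q)) ∧
    ∀ w : List Ltr, Connects p q r s w → Avoids w → w = canonWord (r - p) (s - q) := by
  refine ⟨?_, ?_, ?_⟩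
  · unfold canonWord
    split
    · refine ⟨by simp [List.mem_append, List.mem_replicate], ?_, ?_⟩ <;>
        · rw [disp_ca]; omega
    · refine ⟨by simp [List.mem_append, List.mem_replicate], ?_, ?_⟩ <;>
        · rw [disp_cb]; omega
  · unfold canonWord
    split
    · exact avoids_ca _ _
    · exact avoids_cb _ _
  · intro w hc hav
    obtain ⟨k, m, hcase⟩ := struct hc.1 hav
    obtain ⟨-, h1, h2⟩ := hc
    rcases hcase with rfl | rfl
    · rw [disp_ca] at h1 h2
      have hk : k = s - q := by omega
      have hm : m = (r - p) - (s - q) := by omega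
      rw [canonWord, if_pos (by omega), hk, hm]
    · rw [disp_cb] at h1 h2
      by_cases hm0 : m = 0
      · subst hm0
        have hk : k = s - q := by omega
        rw [canonWord, if_pos (by omega), hk]
        simp [show r - p - (s - q) = 0 by omega]
      · have : ¬ (s - q ≤ r - p) := by omega
        rw [canonWord, if_neg this, show k = r - p by omega,
          show m = (s - q) - (r - p) by omega]
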